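/- Define h_ℓ(x) = Δ^ℓ[ C(x,ℓ) ψ(x) ], where C(x,ℓ) is the generalized binomial coefficient. Then h_{ℓ+1}(x) - h_ℓ(x) = 1/(ℓ+1) for all ℓ ≥ 1 and x > 0. -/

import Mathlib

/-- The forward difference operator `Δf(x) = f(x+1) - f(x)`. -/
def deltaOp (f : ℝ → ℝ) : ℝ → ℝ := fun x => f (x + 1) - f x

/-- The generalized binomial coefficient `C(y,ℓ) = y(y-1)⋯(y-ℓ+1)/ℓ!`. -/
noncomputable def genBinom (y : ℝ) (ℓ : ℕ) : ℝ :=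
  (∏ i ∈ Finset.range ℓ, (y - i)) / (Nat.factorial ℓ)

/-- The digamma function `ψ = Γ'/Γ`. -/
noncomputable def digamma (x : ℝ) : ℝ := deriv (fun y => Real.log (Real.Gamma y)) x

lemma gamma_diff {y : ℝ} (hy : 0 < y) : DifferentiableAt ℝ Real.Gamma y :=
  Real.differentiableAt_Gamma (fun m =>
    ne_of_gt (by have := Nat.cast_nonneg (α := ℝ) m; linarith))

lemma digamma_eq {y : ℝ} (hy : 0 < y) :
    digamma y = deriv Real.Gamma y / Real.Gamma y :=
  (((gamma_diff hy).hasDerivAt).log (Real.Gamma_pos_of_pos hy).ne').deriv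

lemma deriv_gamma_add_one {y : ℝ} (hy : 0 < y) :
    deriv Real.Gamma (y + 1) = Real.Gamma y + y * deriv Real.Gamma y := by
  have h1 : HasDerivAt (fun z => Real.Gamma (z + 1)) (deriv Real.Gamma (y + 1) * 1) y :=
    by have := ((gamma_diff (by linarith : (0:ℝ) < y + 1)).hasDerivAt).comp y
        ((hasDerivAt_id y).add_const 1)
       exact this
  have h2 : HasDerivAt (fun z => z * Real.Gamma z)
      (1 * Real.Gamma y + y * deriv Real.Gamma y) y :=
    (hasDerivAt_id y).mul (gamma_diff hy).hasDerivAt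
  have h3 : (fun z => Real.Gamma (z + 1)) =ᶠ[nhds y] (fun z => z * Real.Gamma z) := by
    filter_upwards [eventually_gt_nhds hy] with z hz
    exact Real.Gamma_add_one hz.ne'
  have h2' : HasDerivAt (fun z => Real.Gamma (z + 1))
      (1 * Real.Gamma y + y * deriv Real.Gamma y) y := h2.congr_of_eventuallyEq h3
  have := h1.unique h2'
  linarith [this]

lemma digamma_add_one {y : ℝ} (hy : 0 < y) :
    digamma (y + 1) = digamma y + 1 / y := by
  have hΓ := (Real.Gamma_pos_of_pos hy).ne'
  rw [digamma_eq (by linarith : (0:ℝ) < y + 1), digamma_eq hy, deriv_gamma_add_one hy,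
    Real.Gamma_add_one hy.ne']
  field_simp
  ring

lemma delta_iter_congr (n : ℕ) (F G : ℝ → ℝ) (h : ∀ y > 0, F y = G y) :
    ∀ x > 0, deltaOp^[n] F x = deltaOp^[n] G x := by
  induction n generalizing F G with
  | zero => simpa using h
  | succ n ih =>
    intro x hx
    rw [Function.iterate_succ_apply, Function.iterate_succ_apply]
    refine ih _ _ ?_ x hx
    intro y hy
    simp only [deltaOp, h y hy, h (y + 1) (by linarith)]

lemma delta_iter_add (n : ℕ) (F G : ℝ → ℝ) (x : ℝ) :
    deltaOp^[n] (fun y => F y + G y) x = deltaOp^[n] F x + deltaOp^[n] G x := by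
  induction n generalizing F G x with
  | zero => simp
  | succ n ih =>
    rw [Function.iterate_succ_apply, Function.iterate_succ_apply,
      Function.iterate_succ_apply]
    have : deltaOp (fun y => F y + G y) = fun y => deltaOp F y + deltaOp G y := by
      funext y; simp only [deltaOp]; ring
    rw [this, ih]

lemma delta_iter_const_mul (n : ℕ) (c : ℝ) (F : ℝ → ℝ) (x : ℝ) :
    deltaOp^[n] (fun y => c * F y) x = c * deltaOp^[n] F x := by
  induction n generalizing F x with
  | zero => simp
  | succ n ih =>
    rw [Function.iterate_succ_apply, Function.iterate_succ_apply]
    have : deltaOp (fun y => c * F y) = fun y => c * deltaOp F y := by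
      funext y; simp only [deltaOp]; ring
    rw [this, ih]

lemma delta_iter_shift (n : ℕ) (F : ℝ → ℝ) (x : ℝ) :
    deltaOp^[n] (fun y => F (y - 1)) x = deltaOp^[n] F (x - 1) := by
  induction n generalizing F x with
  | zero => simp
  | succ n ih =>
    rw [Function.iterate_succ_apply, Function.iterate_succ_apply]
    have : deltaOp (fun y => F (y - 1)) = fun y => deltaOp F (y - 1) := by
      funext y
      simp only [deltaOp]
      ring_nf
    rw [this, ih]

lemma delta_iter_shift_genBinom (n k : ℕ) (x : ℝ) :
    deltaOp^[n] (fun y => genBinom (y - 1) k) x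
      = deltaOp^[n] (fun y => genBinom y k) (x - 1) :=
  delta_iter_shift n (fun z => genBinom z k) x

lemma pascal (y : ℝ) (k : ℕ) :
    genBinom (y + 1) (k + 1) - genBinom y (k + 1) = genBinom y k := by
  have h1 : ∏ i ∈ Finset.range (k + 1), (y + 1 - i) =
      (y + 1) * ∏ i ∈ Finset.range k, (y - i) := by
    rw [Finset.prod_range_succ']
    have : ∀ i ∈ Finset.range k, y + 1 - (((i : ℕ) + 1 : ℕ) : ℝ) = y - i := by
      intro i _; push_cast; ring
    rw [Finset.prod_congr rfl this]
    simp only [Nat.cast_zero, sub_zero]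
    ring
  have h2 : ∏ i ∈ Finset.range (k + 1), (y - i) =
      (∏ i ∈ Finset.range k, (y - i)) * (y - k) := Finset.prod_range_succ _ _
  have h3 : (Nat.factorial (k + 1) : ℝ) = ((k : ℝ) + 1) * Nat.factorial k := by
    rw [Nat.factorial_succ]; push_cast; ring
  rw [genBinom, genBinom, genBinom, h1, h2, h3]
  have hk : (Nat.factorial k : ℝ) ≠ 0 := Nat.cast_ne_zero.mpr (Nat.factorial_ne_zero k)
  have hk1 : (k : ℝ) + 1 ≠ 0 := by positivity
  field_simp
  ring

lemma delta_genBinom (k : ℕ) :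
    deltaOp (fun y => genBinom y (k + 1)) = fun y => genBinom y k := by
  funext y; exact pascal y k

lemma delta_iter_genBinom_self (k : ℕ) (x : ℝ) :
    deltaOp^[k] (fun y => genBinom y k) x = 1 := by
  induction k generalizing x with
  | zero => simp [genBinom]
  | succ k ih =>
    rw [Function.iterate_succ_apply, delta_genBinom]
    exact ih x

lemma delta_iter_genBinom_lt (k : ℕ) (x : ℝ) :
    deltaOp^[k + 1] (fun y => genBinom y k) x = 0 := by
  rw [Function.iterate_succ_apply']
  have : deltaOp^[k] (fun y => genBinom y k) = fun _ => (1:ℝ) := by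
    funext z; exact delta_iter_genBinom_self k z
  rw [this]
  simp [deltaOp]

lemma hprod_aux (m : ℕ) (y : ℝ) (hy : 0 < y) :
    genBinom (y + 1) (m + 1 + 1) * (1 / y) =
      (1 / ((m : ℝ) + 2)) * genBinom (y - 1) (m + 1)
        + (1 / ((m : ℝ) + 1)) * genBinom (y - 1) m := by
  set P : ℝ := ∏ i ∈ Finset.range m, (y - 1 - i) with hP
  have e2 : ∏ i ∈ Finset.range (m + 1), (y - i) = y * P := by
    rw [Finset.prod_range_succ']
    have : ∀ i ∈ Finset.range m, y - (((i : ℕ) + 1 : ℕ) : ℝ) = y - 1 - i := by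
      intro i _; push_cast; ring
    rw [Finset.prod_congr rfl this]
    simp only [Nat.cast_zero, sub_zero]
    ring
  have e1 : ∏ i ∈ Finset.range (m + 1 + 1), (y + 1 - i) = (y + 1) * (y * P) := by
    rw [Finset.prod_range_succ']
    have : ∀ i ∈ Finset.range (m + 1), y + 1 - (((i : ℕ) + 1 : ℕ) : ℝ) = y - i := by
      intro i _; push_cast; ring
    rw [Finset.prod_congr rfl this, e2]
    simp only [Nat.cast_zero, sub_zero]
    ring
  have e3 : ∏ i ∈ Finset.range (m + 1), (y - 1 - i) = P * (y - 1 - m) :=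
    Finset.prod_range_succ _ _
  have hf2 : (Nat.factorial (m + 1 + 1) : ℝ)
      = ((m : ℝ) + 2) * (((m : ℝ) + 1) * Nat.factorial m) := by
    rw [Nat.factorial_succ, Nat.factorial_succ]; push_cast; ring
  have hf1 : (Nat.factorial (m + 1) : ℝ) = ((m : ℝ) + 1) * Nat.factorial m := by
    rw [Nat.factorial_succ]; push_cast; ring
  have hm0 : (Nat.factorial m : ℝ) ≠ 0 := Nat.cast_ne_zero.mpr (Nat.factorial_ne_zero m)
  have hm1 : (m : ℝ) + 1 ≠ 0 := by positivity
  have hm2 : (m : ℝ) + 2 ≠ 0 := by positivity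
  rw [genBinom, genBinom, genBinom, e1, e3, hf2, hf1]
  field_simp
  ring

/-- With `h_ℓ(x) = Δ^ℓ[C(x,ℓ) ψ(x)]`, one has `h_{ℓ+1}(x) - h_ℓ(x) = 1/(ℓ+1)` for
`ℓ ≥ 1` and `x > 0`. -/
theorem h_succ_sub_h (ℓ : ℕ) (hℓ : 1 ≤ ℓ) (x : ℝ) (hx : 0 < x) :
    (deltaOp^[ℓ + 1] fun y => genBinom y (ℓ + 1) * digamma y) x
      - (deltaOp^[ℓ] fun y => genBinom y ℓ * digamma y) x = 1 / (ℓ + 1) := by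
  obtain ⟨m, rfl⟩ := Nat.exists_eq_add_of_le hℓ
  rw [Nat.add_comm 1 m]
  rw [Function.iterate_succ_apply]
  have key : ∀ y > (0:ℝ), deltaOp (fun y => genBinom y (m + 1 + 1) * digamma y) y =
      genBinom y (m + 1) * digamma y +
        ((1 / ((m : ℝ) + 2)) * genBinom (y - 1) (m + 1)
          + (1 / ((m : ℝ) + 1)) * genBinom (y - 1) m) := by
    intro y hy
    have hψ := digamma_add_one hy
    have hP := pascal y (m + 1)
    have expand : deltaOp (fun y => genBinom y (m + 1 + 1) * digamma y) y =
        (genBinom (y + 1) (m + 1 + 1) - genBinom y (m + 1 + 1)) * digamma y +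
          genBinom (y + 1) (m + 1 + 1) * (1 / y) := by
      simp only [deltaOp, hψ]; ring
    rw [expand, hP, hprod_aux m y hy]
  rw [delta_iter_congr (m + 1) _ _ key x hx]
  rw [delta_iter_add, delta_iter_add, delta_iter_const_mul, delta_iter_const_mul,
    delta_iter_shift_genBinom, delta_iter_shift_genBinom]
  rw [delta_iter_genBinom_self (m + 1) (x - 1), delta_iter_genBinom_lt m (x - 1)]
  push_cast
  ring
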